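/- Let S be a nonempty finite multiset of positive integers with n = |S| ≤ 3 and m = max(S). If P is a finite poset whose multiset of maximal chain cardinalities equals S, then |P| ≥ m + n − 1. -/
import Mathlib


open scoped Classical in
/-- The finite set of maximal chains of a finite poset, as finsets. -/
noncomputable def maxChains (α : Type*) [Fintype α] [PartialOrder α] : Finset (Finset α) :=
  Finset.univ.filter (fun s : Finset α => IsMaxChain (· ≤ ·) (s : Set α))

/-- The multiset of cardinalities of the maximal chains of a finite poset. -/
noncomputable def mcMultiset (α : Type*) [Fintype α] [PartialOrder α] : Multiset ℕ :=
  (maxChains α).val.map Finset.card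

lemma mem_maxChains_iff {α : Type*} [Fintype α] [PartialOrder α] {C : Finset α} :
    C ∈ maxChains α ↔ IsMaxChain (· ≤ ·) (C : Set α) := by
  classical
  simp [maxChains]

lemma le_one_of_card_le {α : Type*} [Fintype α] [PartialOrder α] {C1 : Finset α}
    (h1 : IsMaxChain (· ≤ ·) (C1 : Set α)) (hcard : Fintype.card α ≤ C1.card) :
    (maxChains α).card ≤ 1 := by
  have hEq : C1 = Finset.univ :=
    Finset.eq_univ_of_card _ (le_antisymm (Finset.card_le_univ _) hcard)
  have hsub : maxChains α ⊆ {C1} := by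
    intro D hD
    rw [mem_maxChains_iff] at hD
    have hDC : (D : Set α) ⊆ (C1 : Set α) := by
      rw [hEq]; simp
    have := hD.2 h1.1 hDC
    simp [Finset.coe_injective this]
  calc (maxChains α).card ≤ ({C1} : Finset (Finset α)).card := Finset.card_le_card hsub
    _ = 1 := Finset.card_singleton _

lemma le_two_of_card_le {α : Type*} [Fintype α] [PartialOrder α] {C1 : Finset α}
    (h1 : IsMaxChain (· ≤ ·) (C1 : Set α)) (hcard : Fintype.card α ≤ C1.card + 1) :
    (maxChains α).card ≤ 2 := by
  classical
  by_cases hx : ∃ x, x ∉ C1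
  · obtain ⟨x, hx⟩ := hx
    set D0 : Finset α := insert x (C1.filter fun y => y ≤ x ∨ x ≤ y) with hD0def
    have hD0chain : IsChain (· ≤ ·) (D0 : Set α) := by
      rw [hD0def, Finset.coe_insert]
      apply IsChain.insert
      · exact h1.1.mono (by intro y hy; simp at hy; exact hy.1)
      · intro b hb _
        simp only [Finset.coe_filter, Set.mem_setOf_eq] at hb
        rcases hb.2 with h | h
        · exact Or.inr h
        · exact Or.inl h
    have huniv : (Finset.univ : Finset α) = insert x C1 := by
      symm
      apply Finset.eq_univ_of_card
      have h := Finset.card_le_univ (insert x C1)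
      rw [Finset.card_insert_of_notMem hx] at h ⊢
      omega
    have hsub : maxChains α ⊆ {C1, D0} := by
      intro D hD
      rw [mem_maxChains_iff] at hD
      by_cases hxD : x ∈ D
      · have hDsub : (D : Set α) ⊆ (D0 : Set α) := by
          intro y hy
          have hy' : y ∈ insert x C1 := by rw [← huniv]; exact Finset.mem_univ _
          rw [Finset.mem_insert] at hy'
          rcases hy' with rfl | hyC
          · simp [hD0def]
          · by_cases hyx : y = x
            · simp [hD0def, hyx]
            · have hcomp := hD.1 hy (by exact_mod_cast hxD) hyx
              simp [hD0def, Finset.mem_filter, hyC]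
              tauto
        have := hD.2 hD0chain hDsub
        have : D = D0 := Finset.coe_injective this
        simp [this]
      · have hDsub : (D : Set α) ⊆ (C1 : Set α) := by
          intro y hy
          have hy' : y ∈ insert x C1 := by rw [← huniv]; exact Finset.mem_univ _
          rw [Finset.mem_insert] at hy'
          rcases hy' with rfl | hyC
          · exact absurd hy (by exact_mod_cast hxD)
          · exact_mod_cast hyC
        have := hD.2 h1.1 hDsub
        have : D = C1 := Finset.coe_injective this
        simp [this]
    calc (maxChains α).card ≤ ({C1, D0} : Finset (Finset α)).card := Finset.card_le_card hsub
      _ ≤ 2 := Finset.card_insert_le _ _ |>.trans (by simp)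
  · push_neg at hx
    have : Fintype.card α ≤ C1.card := by
      have : C1 = Finset.univ := Finset.eq_univ_iff_forall.2 hx
      simp [this]
    exact (le_one_of_card_le h1 this).trans one_le_two

theorem small_multiset_lower_bound {α : Type*} [Fintype α] [PartialOrder α]
    (S : Multiset ℕ) (hS : mcMultiset α = S) (hn : Multiset.card S ≤ 3)
    (hpos : ∀ x ∈ S, 0 < x) (m : ℕ) (hm : m ∈ S) (hmax : ∀ x ∈ S, x ≤ m) :
    m + Multiset.card S - 1 ≤ Fintype.card α := by
  classical
  have hcardS : Multiset.card S = (maxChains α).card := by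
    rw [← hS, mcMultiset, Multiset.card_map]; rfl
  obtain ⟨C1, hC1mem, hC1card⟩ : ∃ C ∈ maxChains α, C.card = m := by
    rw [← hS, mcMultiset] at hm
    obtain ⟨C, hC, hCc⟩ := Multiset.mem_map.1 hm
    exact ⟨C, hC, hCc⟩
  rw [mem_maxChains_iff] at hC1mem
  have hm_le : m ≤ Fintype.card α := hC1card ▸ Finset.card_le_univ C1
  by_cases h1 : Fintype.card α ≤ m
  · have := le_one_of_card_le hC1mem (by omega)
    omega
  · by_cases h2 : Fintype.card α ≤ m + 1
    · have := le_two_of_card_le hC1mem (by omega)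
      omega
    · omega
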